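/- Let K be a field of characteristic zero and let D = ∂_{x_1} + (a_2·x_2 + b_2)·∂_{x_2} + (a_3·x_3 + b_3)·∂_{x_3} be the K-derivation of K[x_1,x_2,x_3] with a_2, b_2 ∈ K[x_1], a_3, b_3 ∈ K[x_1,x_2], and a_3 = 0. If D is a simple derivation, then Im D = D(K[x_1,x_2,x_3]) is not a Mathieu–Zhao space of K[x_1,x_2,x_3]. -/

import Mathlib

open MvPolynomial

/-- A `K`-subspace `M` of `R` is a Mathieu–Zhao space if for all `a, b ∈ R` such that
`a ^ m ∈ M` for all `m ≥ 1`, there exists `N` such that `b * a ^ m ∈ M` for all `m ≥ N`. -/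
def IsMathieuZhao (K : Type*) {R : Type*} [Field K] [CommRing R] [Algebra K R]
    (M : Submodule K R) : Prop :=
  ∀ a b : R, (∀ m : ℕ, 1 ≤ m → a ^ m ∈ M) →
    ∃ N : ℕ, ∀ m : ℕ, N ≤ m → b * a ^ m ∈ M

/-- A `K`-derivation `D` of `R` is simple if the only ideals `I` of `R` with `D(I) ⊆ I`
are `0` and `R`. -/
def Derivation.IsSimple {K R : Type*} [CommRing K] [CommRing R] [Algebra K R]
    (D : Derivation K R R) : Prop :=
  ∀ I : Ideal R, (∀ a ∈ I, D a ∈ I) → I = ⊥ ∨ I = ⊤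

namespace S9Aux


variable {K : Type*} [Field K]

theorem coeff_pderiv {σ : Type*} [DecidableEq σ] (i : σ) (f : MvPolynomial σ K) (m : σ →₀ ℕ) :
    coeff m (pderiv i f) = ((m i : K) + 1) * coeff (m + Finsupp.single i 1) f := by
  induction f using MvPolynomial.induction_on' with
  | add p q hp hq => simp [hp, hq]; ring
  | monomial s a =>
    rw [pderiv_monomial, coeff_monomial, coeff_monomial]
    by_cases h : s = m + Finsupp.single i 1
    · have hsi : s i = m i + 1 := by simp [h]
      have hsub : s - Finsupp.single i 1 = m := by
        rw [h]; exact add_tsub_cancel_right _ _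
      rw [if_pos hsub, if_pos h, hsi]
      push_cast; ring
    · rw [if_neg h]
      by_cases h2 : s - Finsupp.single i 1 = m
      · have hsi : s i = 0 := by
          by_contra hsi
          apply h
          rw [← h2, tsub_add_cancel_of_le]
          exact Finsupp.single_le_iff.mpr (Nat.one_le_iff_ne_zero.mpr hsi)
        rw [if_pos h2, hsi]
        simp
      · rw [if_neg h2, mul_zero]

theorem not_mem_vars_of_pderiv_eq_zero [CharZero K] {σ : Type*} [DecidableEq σ] {i : σ}
    {f : MvPolynomial σ K} (h : pderiv i f = 0) : i ∉ f.vars := by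
  intro hmem
  rw [mem_vars] at hmem
  obtain ⟨d, hd, hid⟩ := hmem
  have hdi : 1 ≤ d i := Nat.one_le_iff_ne_zero.mpr (Finsupp.mem_support_iff.mp hid)
  have hle : Finsupp.single i 1 ≤ d := Finsupp.single_le_iff.mpr hdi
  set e : σ →₀ ℕ := d - Finsupp.single i 1 with he
  have key := coeff_pderiv i f e
  rw [h, he, tsub_add_cancel_of_le hle, coeff_zero] at key
  have hcf : coeff d f ≠ 0 := Finsupp.mem_support_iff.mp hd
  have hne : ((e i : K) + 1) ≠ 0 := by
    have := Nat.cast_add_one_ne_zero (R := K) (e i)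
    push_cast at this ⊢; exact this
  exact (mul_ne_zero hne hcf) key.symm

theorem coeff_pderiv_iterate {σ : Type*} [DecidableEq σ] (i : σ) (k : ℕ)
    (f : MvPolynomial σ K) (m : σ →₀ ℕ) :
    ∃ c : ℕ, 0 < c ∧
      coeff m ((fun g => pderiv i g)^[k] f) = (c : K) * coeff (m + Finsupp.single i k) f := by
  induction k generalizing f m with
  | zero => exact ⟨1, one_pos, by simp⟩
  | succ k ih =>
    rw [Function.iterate_succ_apply]
    obtain ⟨c, hc, hcoeff⟩ := ih (pderiv i f) m
    refine ⟨c * ((m + Finsupp.single i k) i + 1), by positivity, ?_⟩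
    rw [hcoeff, coeff_pderiv]
    have h2 : m + Finsupp.single i (k + 1) = m + Finsupp.single i k + Finsupp.single i 1 := by
      rw [add_assoc, ← Finsupp.single_add]
    rw [h2]
    push_cast
    ring

theorem coeff_eq_zero_of_degreeOf_lt {σ : Type*} {i : σ} {f : MvPolynomial σ K} {s : σ →₀ ℕ}
    (h : degreeOf i f < s i) : coeff s f = 0 := by
  by_contra hc
  have hs : s ∈ f.support := Finsupp.mem_support_iff.mpr hc
  have h2 : s i ≤ degreeOf i f := by
    rw [degreeOf_eq_sup]
    exact Finset.le_sup (f := fun m => m i) hs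
  omega

theorem iterate_pderiv_eq_zero {σ : Type*} [DecidableEq σ] {i : σ} {f : MvPolynomial σ K} {k : ℕ}
    (h : degreeOf i f < k) : (fun g => pderiv i g)^[k] f = 0 := by
  ext m
  obtain ⟨c, hc, hcoeff⟩ := coeff_pderiv_iterate i k f m
  have h2 : degreeOf i f < (m + Finsupp.single i k) i := by
    simp only [Finsupp.add_apply, Finsupp.single_eq_same]
    omega
  rw [hcoeff, coeff_eq_zero_of_degreeOf_lt h2, mul_zero, coeff_zero]

variable {K : Type*} [Field K]


theorem pderiv_comm {σ : Type*} [DecidableEq σ] (i j : σ) (f : MvPolynomial σ K) :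
    pderiv i (pderiv j f) = pderiv j (pderiv i f) := by
  by_cases hij : i = j
  · subst hij; rfl
  · ext m
    rw [coeff_pderiv, coeff_pderiv, coeff_pderiv, coeff_pderiv]
    rw [show m + Finsupp.single j 1 + Finsupp.single i 1
        = m + Finsupp.single i 1 + Finsupp.single j 1 from add_right_comm _ _ _]
    have h1 : ((m + Finsupp.single i 1 : σ →₀ ℕ)) j = m j := by
      rw [Finsupp.add_apply, Finsupp.single_eq_of_ne' hij, add_zero]
    have h2 : ((m + Finsupp.single j 1 : σ →₀ ℕ)) i = m i := by
      rw [Finsupp.add_apply, Finsupp.single_eq_of_ne' (Ne.symm hij), add_zero]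
    rw [h1, h2]
    ring

theorem pderiv_eq_zero_of_supported {σ : Type*} [DecidableEq σ] {s : Set σ} {i : σ}
    {f : MvPolynomial σ K} (hf : f ∈ supported K s) (hi : i ∉ s) : pderiv i f = 0 :=
  pderiv_eq_zero_of_notMem_vars fun hmem => hi (mem_supported.mp hf hmem)

theorem iterate_pderiv_C_mul {σ : Type*} [DecidableEq σ] (i : σ) (c : K)
    (f : MvPolynomial σ K) (k : ℕ) :
    (fun g => pderiv i g)^[k] (C c * f) = C c * (fun g => pderiv i g)^[k] f := by
  induction k generalizing f with
  | zero => rfl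
  | succ k ih => rw [Function.iterate_succ_apply, Function.iterate_succ_apply, pderiv_C_mul, ih]

theorem iterate_pderiv_zero {σ : Type*} [DecidableEq σ] (i : σ) (k : ℕ) :
    (fun g => pderiv i g)^[k] (0 : MvPolynomial σ K) = 0 := by
  induction k with
  | zero => rfl
  | succ k ih => rw [Function.iterate_succ_apply, map_zero, ih]

theorem iterate_pderiv_X_pow (m : ℕ) :
    (fun g => pderiv (1 : Fin 3) g)^[m] ((X 1 : MvPolynomial (Fin 3) K) ^ m)
    = C (Nat.factorial m : K) := by
  induction m with
  | zero => simp
  | succ m ih =>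
    rw [Function.iterate_succ_apply]
    have h1 : pderiv (1 : Fin 3) ((X 1 : MvPolynomial (Fin 3) K) ^ (m + 1))
        = C ((m : K) + 1) * (X 1) ^ m := by
      rw [pderiv_pow, pderiv_X_self, mul_one, Nat.add_sub_cancel,
        ← map_natCast (C : K →+* MvPolynomial (Fin 3) K) (m + 1), Nat.cast_add, Nat.cast_one]
    rw [h1, iterate_pderiv_C_mul, ih, ← C_mul]
    congr 1
    rw [Nat.factorial_succ]
    push_cast
    ring

theorem isUnit_mv_eq_C : ∀ {n : ℕ} (f : MvPolynomial (Fin n) K), IsUnit f → ∃ c : K, f = C c := by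
  intro n
  induction n with
  | zero =>
    intro f _
    obtain ⟨c, rfl⟩ := C_surjective (Fin 0) f
    exact ⟨c, rfl⟩
  | succ n ih =>
    intro f hf
    have hunit : IsUnit (finSuccEquiv K n f) := hf.map (finSuccEquiv K n)
    have hdeg : (finSuccEquiv K n f).natDegree = 0 := by
      by_contra h
      exact Polynomial.not_isUnit_of_natDegree_pos_of_isReduced _ (Nat.pos_of_ne_zero h) hunit
    have heq : finSuccEquiv K n f = Polynomial.C ((finSuccEquiv K n f).coeff 0) :=
      Polynomial.eq_C_of_natDegree_le_zero (le_of_eq hdeg)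
    have hunit2 : IsUnit ((finSuccEquiv K n f).coeff 0) := by
      rw [heq, Polynomial.isUnit_C] at hunit
      exact hunit
    obtain ⟨c, hc⟩ := ih _ hunit2
    have h4 := RingHom.congr_fun (MvPolynomial.finSuccEquiv_comp_C_eq_C (R := K) n) c
    refine ⟨c, ?_⟩
    calc f = (finSuccEquiv K n).symm (finSuccEquiv K n f) :=
          ((finSuccEquiv K n).symm_apply_apply f).symm
    _ = (finSuccEquiv K n).symm (Polynomial.C (C c)) := by rw [heq, hc]
    _ = C c := h4

variable {K : Type*} [Field K]

theorem phi_injective :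
    Function.Injective (Polynomial.aeval (R := K) (X 0 : MvPolynomial (Fin 3) K)) := by
  have h : ∀ p : Polynomial K,
      MvPolynomial.aeval (![Polynomial.X, 0, 0] : Fin 3 → Polynomial K)
        (Polynomial.aeval (R := K) (X 0 : MvPolynomial (Fin 3) K) p) = p := by
    intro p
    induction p using Polynomial.induction_on' with
    | add p q hp hq => simp only [map_add, hp, hq]
    | monomial n a => simp [Polynomial.aeval_monomial, (Polynomial.C_mul_X_pow_eq_monomial).symm]
  intro a b hab
  have := congrArg (MvPolynomial.aeval (![Polynomial.X, 0, 0] : Fin 3 → Polynomial K)) hab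
  rwa [h a, h b] at this

theorem mem_supported_range_phi {f : MvPolynomial (Fin 3) K}
    (hf : f ∈ supported K ({0} : Set (Fin 3))) :
    ∃ p : Polynomial K, Polynomial.aeval (R := K) (X 0 : MvPolynomial (Fin 3) K) p = f := by
  have h : supported K ({0} : Set (Fin 3))
      = Algebra.adjoin K {(X 0 : MvPolynomial (Fin 3) K)} := by
    rw [supported, Set.image_singleton]
  rw [h, Algebra.adjoin_singleton_eq_range_aeval] at hf
  obtain ⟨p, hp⟩ := hf
  exact ⟨p, hp⟩

theorem phi_mem_supported (p : Polynomial K) :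
    Polynomial.aeval (R := K) (X 0 : MvPolynomial (Fin 3) K) p
      ∈ supported K ({0} : Set (Fin 3)) := by
  have h : supported K ({0} : Set (Fin 3))
      = Algebra.adjoin K {(X 0 : MvPolynomial (Fin 3) K)} := by
    rw [supported, Set.image_singleton]
  rw [h, Algebra.adjoin_singleton_eq_range_aeval]
  exact ⟨p, rfl⟩

theorem phi_derivative (p : Polynomial K) :
    Polynomial.aeval (R := K) (X 0 : MvPolynomial (Fin 3) K) (Polynomial.derivative p)
      = pderiv 0 (Polynomial.aeval (R := K) (X 0 : MvPolynomial (Fin 3) K) p) := by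
  induction p using Polynomial.induction_on' with
  | add p q hp hq => simp only [map_add, hp, hq]
  | monomial n a =>
    rw [Polynomial.derivative_monomial, Polynomial.aeval_monomial, Polynomial.aeval_monomial]
    rw [MvPolynomial.algebraMap_eq, pderiv_C_mul, pderiv_pow,
      pderiv_X_self, mul_one, ← map_natCast (C : K →+* MvPolynomial (Fin 3) K) n]
    rw [← mul_assoc, ← C_mul, mul_comm a (↑n : K), mul_comm (C ((↑n : K) * a)), mul_comm (↑n : K) a]

variable {K : Type*} [Field K] [CharZero K]

theorem exists_antideriv (q : Polynomial K) :
    ∃ p : Polynomial K, Polynomial.derivative p = q := by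
  induction q using Polynomial.induction_on' with
  | add q r hq hr =>
    obtain ⟨p1, hp1⟩ := hq
    obtain ⟨p2, hp2⟩ := hr
    exact ⟨p1 + p2, by rw [map_add, hp1, hp2]⟩
  | monomial n a =>
    refine ⟨Polynomial.C (a / (n + 1)) * Polynomial.X ^ (n + 1), ?_⟩
    rw [Polynomial.derivative_C_mul, Polynomial.derivative_X_pow, ← mul_assoc, ← Polynomial.C_mul,
      Nat.cast_add, Nat.cast_one, div_mul_cancel₀ _ (Nat.cast_add_one_ne_zero n),
      ← Polynomial.C_mul_X_pow_eq_monomial, Nat.add_sub_cancel]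

theorem exists_ode_sol (α : K) (q : Polynomial K) :
    ∃ p : Polynomial K, Polynomial.derivative p = Polynomial.C α * p + q := by
  by_cases hα : α = 0
  · obtain ⟨p, hp⟩ := exists_antideriv q
    exact ⟨p, by rw [hα, map_zero, zero_mul, zero_add, hp]⟩
  · set N := q.natDegree + 1 with hN
    have hqmem : q ∈ Polynomial.degreeLT K N := by
      rw [Polynomial.mem_degreeLT]
      exact lt_of_le_of_lt Polynomial.degree_le_natDegree (by exact_mod_cast Nat.lt_succ_self _)
    set T : Polynomial K →ₗ[K] Polynomial K :=
      Polynomial.derivative - α • LinearMap.id with hT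
    have hTapp : ∀ p, T p = Polynomial.derivative p - Polynomial.C α * p := by
      intro p
      simp [hT, Polynomial.smul_eq_C_mul]
    have hmap : ∀ p ∈ Polynomial.degreeLT K N, T p ∈ Polynomial.degreeLT K N := by
      intro p hp
      rw [Polynomial.mem_degreeLT] at hp ⊢
      rw [hTapp]
      refine lt_of_le_of_lt (Polynomial.degree_sub_le _ _) (max_lt ?_ ?_)
      · exact lt_of_le_of_lt Polynomial.degree_derivative_le hp
      · calc Polynomial.degree (Polynomial.C α * p)
            = Polynomial.degree (Polynomial.C α) + Polynomial.degree p := Polynomial.degree_mul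
        _ = Polynomial.degree p := by rw [Polynomial.degree_C hα, zero_add]
        _ < N := hp
    set L := T.restrict hmap with hL
    have hinj : Function.Injective L := by
      rw [← LinearMap.ker_eq_bot]
      rw [Submodule.eq_bot_iff]
      rintro ⟨p, hp⟩ hker
      have hTp : T p = 0 := congrArg Subtype.val hker
      rw [hTapp] at hTp
      have hdp : Polynomial.derivative p = Polynomial.C α * p := by linear_combination hTp
      apply Subtype.ext
      show p = 0
      by_contra hp0
      have hlt := Polynomial.degree_derivative_lt hp0
      rw [hdp, Polynomial.degree_mul, Polynomial.degree_C hα, zero_add] at hlt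
      exact lt_irrefl _ hlt
    have : FiniteDimensional K (Polynomial.degreeLT K N) :=
      LinearEquiv.finiteDimensional (Polynomial.degreeLTEquiv K N).symm
    have hsurj : Function.Surjective L := (LinearMap.injective_iff_surjective).mp hinj
    obtain ⟨x, hx⟩ := hsurj ⟨q, hqmem⟩
    refine ⟨x.1, ?_⟩
    have hTx : T x.1 = q := by
      have := congrArg Subtype.val hx
      rwa [LinearMap.restrict_apply] at this
    rw [hTapp] at hTx
    linear_combination hTx

theorem iterate_pderiv_sub {K : Type*} [Field K] {σ : Type*} [DecidableEq σ] (i : σ) (k : ℕ)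
    (f g : MvPolynomial σ K) :
    (fun h => pderiv i h)^[k] (f - g)
      = (fun h => pderiv i h)^[k] f - (fun h => pderiv i h)^[k] g := by
  induction k generalizing f g with
  | zero => rfl
  | succ k ih =>
    rw [Function.iterate_succ_apply, Function.iterate_succ_apply, Function.iterate_succ_apply]
    show (fun h => pderiv i h)^[k] (pderiv i (f - g)) = _
    rw [map_sub, ih]

end S9Aux

/-- For `D = ∂_{x₁} + (a₂ x₂ + b₂) ∂_{x₂} + (a₃ x₃ + b₃) ∂_{x₃}` with
`a₂, b₂ ∈ K[x₁]`, `a₃, b₃ ∈ K[x₁, x₂]` and `a₃ = 0`: if `D` is simple, then `Im D`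
is not a Mathieu–Zhao space of `K[x₁, x₂, x₃]`. -/


theorem statement9 (K : Type*) [Field K] [CharZero K]
    (a2 b2 a3 b3 : MvPolynomial (Fin 3) K)
    (ha2 : a2 ∈ supported K ({0} : Set (Fin 3)))
    (hb2 : b2 ∈ supported K ({0} : Set (Fin 3)))
    (ha3 : a3 ∈ supported K ({0, 1} : Set (Fin 3)))
    (hb3 : b3 ∈ supported K ({0, 1} : Set (Fin 3)))
    (ha30 : a3 = 0)
    (D : Derivation K (MvPolynomial (Fin 3) K) (MvPolynomial (Fin 3) K))
    (hD1 : D (X 0) = 1)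
    (hD2 : D (X 1) = a2 * X 1 + b2)
    (hD3 : D (X 2) = a3 * X 2 + b3)
    (hD : Derivation.IsSimple D) :
    ¬ IsMathieuZhao K (LinearMap.range D.toLinearMap) := by
  classical
  intro hMZ
  -- partial derivatives of the coefficient polynomials vanish
  have h1a2 : pderiv 1 a2 = 0 :=
    S9Aux.pderiv_eq_zero_of_supported ha2 (by simp)
  have h2a2 : pderiv 2 a2 = 0 :=
    S9Aux.pderiv_eq_zero_of_supported ha2 (by simp)
  have h1b2 : pderiv 1 b2 = 0 :=
    S9Aux.pderiv_eq_zero_of_supported hb2 (by simp)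
  have h2b2 : pderiv 2 b2 = 0 :=
    S9Aux.pderiv_eq_zero_of_supported hb2 (by simp)
  have h2b3 : pderiv 2 b3 = 0 :=
    S9Aux.pderiv_eq_zero_of_supported hb3 (by simp)
  -- the explicit formula for D
  have hDeq : ∀ f : MvPolynomial (Fin 3) K,
      D f = pderiv 0 f + (a2 * X 1 + b2) * pderiv 1 f + b3 * pderiv 2 f := by
    have hE : D = pderiv 0 + (a2 * X 1 + b2) • pderiv 1 + b3 • pderiv 2 := by
      apply derivation_ext
      intro i
      fin_cases i
      · show D (X 0) = _
        simp [hD1, pderiv_X_self, pderiv_X_of_ne (show (0 : Fin 3) ≠ 1 by decide),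
          pderiv_X_of_ne (show (0 : Fin 3) ≠ 2 by decide)]
      · show D (X 1) = _
        simp [hD2, pderiv_X_self, pderiv_X_of_ne (show (1 : Fin 3) ≠ 0 by decide),
          pderiv_X_of_ne (show (1 : Fin 3) ≠ 2 by decide)]
      · show D (X 2) = _
        simp [hD3, ha30, pderiv_X_self, pderiv_X_of_ne (show (2 : Fin 3) ≠ 0 by decide),
          pderiv_X_of_ne (show (2 : Fin 3) ≠ 1 by decide)]
    intro f
    rw [hE]
    simp
  -- Darboux elements are constants
  have hDarb : ∀ (f : MvPolynomial (Fin 3) K) (α : K), D f = C α * f → ∃ c : K, f = C c := by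
    intro f α hf
    by_cases hf0 : f = 0
    · exact ⟨0, by rw [hf0, map_zero]⟩
    have hstab : ∀ a ∈ Ideal.span {f}, D a ∈ Ideal.span {f} := by
      intro a ha
      rw [Ideal.mem_span_singleton] at ha ⊢
      obtain ⟨r, rfl⟩ := ha
      rw [Derivation.leibniz, smul_eq_mul, smul_eq_mul, hf]
      exact dvd_add (Dvd.intro _ rfl) (dvd_mul_of_dvd_right (dvd_mul_left _ _) _)
    rcases hD (Ideal.span {f}) hstab with h | h
    · exact absurd (Ideal.span_singleton_eq_bot.mp h) hf0
    · exact S9Aux.isUnit_mv_eq_C f (Ideal.span_singleton_eq_top.mp h)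
  have hker : ∀ f : MvPolynomial (Fin 3) K, D f = 0 → ∃ c : K, f = C c := by
    intro f hf
    exact hDarb f 0 (by rw [map_zero, zero_mul, hf])
  -- a2 comes from a univariate polynomial
  obtain ⟨q2, hq2⟩ := S9Aux.mem_supported_range_phi ha2
  by_cases hq2deg : q2.natDegree = 0
  -- Case 1 : a2 is a constant; D is then not simple, contradiction
  · set α := q2.coeff 0 with hα
    have ha2C : a2 = C α := by
      rw [← hq2, Polynomial.eq_C_of_natDegree_le_zero (le_of_eq hq2deg), Polynomial.aeval_C,
        MvPolynomial.algebraMap_eq]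
    obtain ⟨p2, hp2⟩ := S9Aux.mem_supported_range_phi hb2
    obtain ⟨β, hβ⟩ := S9Aux.exists_ode_sol α (-p2)
    set fd : MvPolynomial (Fin 3) K :=
      X 1 + Polynomial.aeval (R := K) (X 0 : MvPolynomial (Fin 3) K) β with hfd
    have hfβ1 : pderiv 1 (Polynomial.aeval (R := K) (X 0 : MvPolynomial (Fin 3) K) β) = 0 :=
      S9Aux.pderiv_eq_zero_of_supported (S9Aux.phi_mem_supported β) (by simp)
    have hfβ2 : pderiv 2 (Polynomial.aeval (R := K) (X 0 : MvPolynomial (Fin 3) K) β) = 0 :=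
      S9Aux.pderiv_eq_zero_of_supported (S9Aux.phi_mem_supported β) (by simp)
    have hDfd : D fd = C α * fd := by
      rw [hfd, map_add, hD2, hDeq, hfβ1, hfβ2, mul_zero, mul_zero, add_zero, add_zero,
        ← S9Aux.phi_derivative, hβ]
      rw [map_add, map_mul, map_neg, hp2, Polynomial.aeval_C, MvPolynomial.algebraMap_eq, ha2C]
      ring
    obtain ⟨c, hc⟩ := hDarb fd α hDfd
    have h1fd : pderiv 1 fd = 1 := by
      rw [hfd, map_add, pderiv_X_self, hfβ1, add_zero]
    rw [hc, pderiv_C] at h1fd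
    exact one_ne_zero h1fd.symm
  -- Case 2 : a2 is nonconstant
  · -- commutation relations
    have hcomm2 : ∀ h : MvPolynomial (Fin 3) K, pderiv 2 (D h) = D (pderiv 2 h) := by
      intro h
      have e1 : pderiv 2 (a2 * X 1 + b2) = 0 := by
        rw [map_add, pderiv_mul, h2a2, h2b2, pderiv_X_of_ne (show (1 : Fin 3) ≠ 2 by decide)]
        ring
      rw [hDeq h, hDeq (pderiv 2 h)]
      rw [map_add, map_add, pderiv_mul, pderiv_mul, e1, h2b3,
        S9Aux.pderiv_comm 2 0 h, S9Aux.pderiv_comm 2 1 h]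
      ring
    have hcomm1 : ∀ h : MvPolynomial (Fin 3) K, pderiv 2 h = 0 →
        pderiv 1 (D h) = D (pderiv 1 h) + a2 * pderiv 1 h := by
      intro h hh
      have e2 : pderiv 2 (pderiv 1 h) = 0 := by
        rw [S9Aux.pderiv_comm 2 1 h, hh, map_zero]
      have e1 : pderiv 1 (a2 * X 1 + b2) = a2 := by
        rw [map_add, pderiv_mul, h1a2, h1b2, pderiv_X_self]
        ring
      rw [hDeq h, hDeq (pderiv 1 h), hh, mul_zero, add_zero, e2, mul_zero, add_zero]
      rw [map_add, pderiv_mul, e1, S9Aux.pderiv_comm 1 0 h]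
      ring
    -- get a preimage of X 1 ^ m from the Mathieu-Zhao hypothesis
    set m : ℕ := degreeOf 1 b3 + 1 with hm
    obtain ⟨N, hNmem⟩ := hMZ 1 (X 1 ^ m) (fun k hk =>
      LinearMap.mem_range.mpr ⟨X 0, by rw [one_pow]; exact hD1⟩)
    have hmem := hNmem N le_rfl
    rw [one_pow, mul_one] at hmem
    obtain ⟨f, hf⟩ := LinearMap.mem_range.mp hmem
    have hf' : D f = X 1 ^ m := hf
    -- step 1 : pderiv 2 f is a constant
    have hc2 : D (pderiv 2 f) = 0 := by
      rw [← hcomm2 f, hf', pderiv_pow, pderiv_X_of_ne (show (1 : Fin 3) ≠ 2 by decide),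
        mul_zero]
    obtain ⟨c, hcf⟩ := hker _ hc2
    -- step 2 : subtract c * X 2
    set g : MvPolynomial (Fin 3) K := f - C c * X 2 with hgdef
    have hg2 : pderiv 2 g = 0 := by
      rw [hgdef, map_sub, hcf, pderiv_C_mul, pderiv_X_self, mul_one, sub_self]
    have hDg : D g = X 1 ^ m - C c * b3 := by
      rw [hgdef, map_sub, hf', ← MvPolynomial.smul_eq_C_mul, Derivation.map_smul, hD3, ha30,
        zero_mul, zero_add, MvPolynomial.smul_eq_C_mul]
    -- step 3 : iterate pderiv 1
    have hu : ∀ k : ℕ, pderiv 2 ((fun h => pderiv 1 h)^[k] g) = 0 ∧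
        D ((fun h => pderiv 1 h)^[k] g)
          + C ((k : ℕ) : K) * a2 * ((fun h => pderiv 1 h)^[k] g)
          = (fun h => pderiv 1 h)^[k] (D g) := by
      intro k
      induction k with
      | zero =>
        refine ⟨hg2, ?_⟩
        simp
      | succ k ih =>
        obtain ⟨ih2, ihD⟩ := ih
        have step2 : pderiv 2 ((fun h => pderiv 1 h)^[k + 1] g) = 0 := by
          rw [Function.iterate_succ_apply']
          show pderiv 2 (pderiv 1 ((fun h => pderiv 1 h)^[k] g)) = 0
          rw [S9Aux.pderiv_comm 2 1, ih2, map_zero]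
        refine ⟨step2, ?_⟩
        rw [Function.iterate_succ_apply' (fun h => pderiv 1 h) k (D g), ← ihD]
        show D ((fun h => pderiv 1 h)^[k + 1] g)
            + C ((k + 1 : ℕ) : K) * a2 * ((fun h => pderiv 1 h)^[k + 1] g)
            = pderiv 1 (D ((fun h => pderiv 1 h)^[k] g)
              + C ((k : ℕ) : K) * a2 * ((fun h => pderiv 1 h)^[k] g))
        rw [map_add, hcomm1 _ ih2, mul_assoc (C ((k : ℕ) : K)), pderiv_C_mul, pderiv_mul,
          h1a2, zero_mul, zero_add]
        rw [Function.iterate_succ_apply' (fun h => pderiv 1 h) k g]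
        show D (pderiv 1 ((fun h => pderiv 1 h)^[k] g))
            + C ((k + 1 : ℕ) : K) * a2 * pderiv 1 ((fun h => pderiv 1 h)^[k] g) = _
        rw [show ((k + 1 : ℕ) : K) = ((k : ℕ) : K) + 1 by push_cast; ring, C_add, C_1]
        ring
    -- specialize at k = m
    have hrhs : (fun h => pderiv 1 h)^[m] (D g) = C ((Nat.factorial m : ℕ) : K) := by
      rw [hDg, S9Aux.iterate_pderiv_sub, S9Aux.iterate_pderiv_X_pow,
        S9Aux.iterate_pderiv_C_mul, S9Aux.iterate_pderiv_eq_zero (by omega), mul_zero, sub_zero]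
    obtain ⟨hu2m, hum⟩ := hu m
    rw [hrhs] at hum
    set u : MvPolynomial (Fin 3) K := (fun h => pderiv 1 h)^[m] g with hudef
    have hune : u ≠ 0 := by
      intro h0
      rw [h0, map_zero, mul_zero, add_zero] at hum
      have : ((Nat.factorial m : ℕ) : K) ≠ 0 :=
        Nat.cast_ne_zero.mpr (Nat.factorial_ne_zero m)
      exact this (by
        have := hum.symm
        rwa [← C_0, C_inj] at this)
    -- find the last nonvanishing derivative
    have hexk : ∃ k, (fun h => pderiv 1 h)^[k] u = 0 :=
      ⟨degreeOf 1 u + 1, S9Aux.iterate_pderiv_eq_zero (Nat.lt_succ_self _)⟩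
    have hn0 : Nat.find hexk ≠ 0 := by
      intro h
      have := Nat.find_spec hexk
      rw [h] at this
      exact hune this
    obtain ⟨r, hr⟩ : ∃ r, Nat.find hexk = r + 1 :=
      ⟨Nat.find hexk - 1, (Nat.succ_pred_eq_of_ne_zero hn0).symm⟩
    set w : MvPolynomial (Fin 3) K := (fun h => pderiv 1 h)^[r] u with hwdef
    have hwne : w ≠ 0 := Nat.find_min hexk (by omega)
    have hw1 : pderiv 1 w = 0 := by
      have hspec := Nat.find_spec hexk
      rw [hr, Function.iterate_succ_apply'] at hspec
      exact hspec
    -- w = iterate (r + m) of g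
    have hwg : w = (fun h => pderiv 1 h)^[r + m] g := by
      rw [hwdef, hudef, ← Function.iterate_add_apply]
    obtain ⟨hw2, hwD⟩ := hu (r + m)
    rw [← hwg] at hw2 hwD
    -- right-hand side is a constant
    have hCex : ∃ ε : K, (fun h => pderiv 1 h)^[r + m] (D g) = C ε := by
      have : (fun h => pderiv 1 h)^[r + m] (D g)
          = (fun h => pderiv 1 h)^[r] ((fun h => pderiv 1 h)^[m] (D g)) :=
        Function.iterate_add_apply _ r m _
      rw [this, hrhs]
      cases r with
      | zero => exact ⟨_, rfl⟩
      | succ r =>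
        refine ⟨0, ?_⟩
        rw [Function.iterate_succ_apply]
        show (fun h => pderiv 1 h)^[r] (pderiv 1 (C _)) = C 0
        rw [pderiv_C, S9Aux.iterate_pderiv_zero, C_0]
    obtain ⟨ε, hε⟩ := hCex
    rw [hε] at hwD
    -- w only involves the variable 0
    have hwsupp : w ∈ supported K ({0} : Set (Fin 3)) := by
      rw [mem_supported]
      intro i hi
      have hi' : i ∈ w.vars := Finset.mem_coe.mp hi
      fin_cases i
      · simp
      · exact absurd hi' (S9Aux.not_mem_vars_of_pderiv_eq_zero hw1)
      · exact absurd hi' (S9Aux.not_mem_vars_of_pderiv_eq_zero hw2)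
    obtain ⟨p, hp⟩ := S9Aux.mem_supported_range_phi hwsupp
    have hpne : p ≠ 0 := by
      intro h0
      rw [h0, map_zero] at hp
      exact hwne hp.symm
    -- rewrite the equation through the embedding
    have hDw : D w = pderiv 0 w := by
      rw [hDeq, hw1, hw2, mul_zero, mul_zero, add_zero, add_zero]
    set γ : K := ((r + m : ℕ) : K) with hγ
    have heqn : Polynomial.aeval (R := K) (X 0 : MvPolynomial (Fin 3) K)
        (Polynomial.derivative p + Polynomial.C γ * q2 * p)
        = Polynomial.aeval (R := K) (X 0 : MvPolynomial (Fin 3) K) (Polynomial.C ε) := by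
      rw [map_add, map_mul, map_mul, S9Aux.phi_derivative, hp, hq2]
      simp only [Polynomial.aeval_C, MvPolynomial.algebraMap_eq]
      rw [← hDw, hγ]
      exact hwD
    have heq2 : Polynomial.derivative p + Polynomial.C γ * q2 * p = Polynomial.C ε :=
      S9Aux.phi_injective heqn
    -- final degree contradiction
    have hγne : γ ≠ 0 := by
      rw [hγ]
      exact Nat.cast_ne_zero.mpr (by omega)
    have hq2ne : q2 ≠ 0 := by
      intro h0
      rw [h0] at hq2deg
      exact hq2deg Polynomial.natDegree_zero
    have hlhs : Polynomial.C γ * q2 * p = Polynomial.C ε - Polynomial.derivative p := by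
      linear_combination heq2
    have hlne : Polynomial.C γ * q2 * p ≠ 0 :=
      mul_ne_zero (mul_ne_zero (Polynomial.C_ne_zero.mpr hγne) hq2ne) hpne
    have hdegl : (Polynomial.C γ * q2 * p).natDegree = q2.natDegree + p.natDegree := by
      rw [Polynomial.natDegree_mul (mul_ne_zero (Polynomial.C_ne_zero.mpr hγne) hq2ne) hpne,
        Polynomial.natDegree_mul (Polynomial.C_ne_zero.mpr hγne) hq2ne,
        Polynomial.natDegree_C, zero_add]
    have hdegr : (Polynomial.C ε - Polynomial.derivative p).natDegree ≤ p.natDegree - 1 ∨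
        (Polynomial.C ε - Polynomial.derivative p).natDegree = 0 := by
      rcases Nat.eq_zero_or_pos p.natDegree with hp0 | hp0
      · right
        have h1 : (Polynomial.derivative p).natDegree = 0 := by
          have := Polynomial.natDegree_derivative_le p
          omega
        have := Polynomial.natDegree_sub_le (Polynomial.C ε) (Polynomial.derivative p)
        rw [Polynomial.natDegree_C] at this
        omega
      · left
        have h1 := Polynomial.natDegree_derivative_le p
        have := Polynomial.natDegree_sub_le (Polynomial.C ε) (Polynomial.derivative p)
        rw [Polynomial.natDegree_C] at this
        omega
    rw [hlhs] at hdegl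
    have hq2pos : 1 ≤ q2.natDegree := Nat.one_le_iff_ne_zero.mpr hq2deg
    rcases hdegr with h | h <;> omega
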